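/- The 2-uniform scramble on the icosahedron graph, whose eggs are exactly the pairs of adjacent vertices, has order 8: its hitting number is 9 and its egg-cut number is 8. -/

import Mathlib

open Finset

/-- A finite loopless multigraph on a vertex type `V`, given by a symmetric
edge-multiplicity function with zero diagonal. -/
structure Multigraph (V : Type) [Fintype V] [DecidableEq V] where
  m : V → V → ℕ
  symm : ∀ u v, m u v = m v u
  loopless : ∀ v, m v v = 0

namespace Multigraph

variable {V : Type} [Fintype V] [DecidableEq V] (G : Multigraph V)

/-- The underlying simple graph: adjacent iff joined by at least one edge. -/
def toSimpleGraph : SimpleGraph V where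
  Adj u v := 0 < G.m u v
  symm := by
    constructor
    intro u v h
    rw [G.symm v u]
    exact h
  loopless := by
    constructor
    intro v h
    rw [G.loopless v] at h
    exact lt_irrefl 0 h

/-- A multigraph is connected if its underlying simple graph is. -/
def Connected : Prop := G.toSimpleGraph.Connected

/-- The valence of a vertex: the number of edges incident to it. -/
def val (v : V) : ℕ := ∑ w, G.m v w

end Multigraph

/-- The degree of a divisor: the sum of its values. -/
def Divisor.deg {V : Type} [Fintype V] (D : V → ℤ) : ℤ := ∑ v, D v

/-- A divisor is effective if all its values are nonnegative. -/
def Divisor.Effective {V : Type} (D : V → ℤ) : Prop := ∀ v, 0 ≤ D v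

namespace Multigraph

variable {V : Type} [Fintype V] [DecidableEq V] (G : Multigraph V)

/-- The result of firing the vertex `v`: `v` loses its valence many chips, and
every other vertex `w` gains `m v w` chips. -/
def fire (v : V) (D : V → ℤ) : V → ℤ :=
  fun w => D w + (G.m v w : ℤ) - if w = v then (G.val v : ℤ) else 0

/-- Two divisors are equivalent if one is obtained from the other by a finite
sequence of firing moves. -/
def Equivalent (D D' : V → ℤ) : Prop :=
  Relation.ReflTransGen (fun A B => ∃ v, B = G.fire v A) D D'

/-- A divisor `D` wins the Gonality Game if for every vertex `q`, the divisor
`D - 1_q` is equivalent to an effective divisor. -/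
def Winning (D : V → ℤ) : Prop :=
  ∀ q : V, ∃ D' : V → ℤ,
    G.Equivalent (fun w => D w - if w = q then 1 else 0) D' ∧ Divisor.Effective D'

/-- The gonality of `G`: the minimum degree of an effective divisor that wins
the Gonality Game. -/
noncomputable def gonality : ℕ :=
  sInf {n : ℕ | ∃ D : V → ℤ, Divisor.Effective D ∧ G.Winning D ∧ Divisor.deg D = (n : ℤ)}

end Multigraph

/-- The multigraph associated to a simple graph: one edge for each adjacency. -/
def Multigraph.ofSimpleGraph {V : Type} [Fintype V] [DecidableEq V]
    (G : SimpleGraph V) [DecidableRel G.Adj] : Multigraph V where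
  m u v := if G.Adj u v then 1 else 0
  symm := by
    intro u v
    by_cases h : G.Adj u v
    · simp [h, h.symm]
    · have h' : ¬ G.Adj v u := fun hvu => h hvu.symm
      simp [h, h']
  loopless := by intro v; simp

/-- A hitting set for a collection of vertex sets: a set of vertices meeting
every member of the collection. -/
def IsHittingSet {V : Type} [DecidableEq V] (B : Finset (Finset V)) (W : Finset V) : Prop :=
  ∀ A ∈ B, (A ∩ W).Nonempty

/-- The minimum size of a hitting set for a collection of vertex sets. -/
noncomputable def hittingNumber {V : Type} [DecidableEq V] (B : Finset (Finset V)) : ℕ :=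
  sInf {k : ℕ | ∃ W : Finset V, IsHittingSet B W ∧ W.card = k}

namespace Multigraph

variable {V : Type} [Fintype V] [DecidableEq V] (G : Multigraph V)

/-- A set of vertices induces a connected subgraph. -/
def ConnectedSet (A : Finset V) : Prop :=
  (G.toSimpleGraph.induce (A : Set V)).Connected

/-- Two vertex sets touch: they share a vertex, or an edge of `G` joins them. -/
def Touches (A B : Finset V) : Prop :=
  (A ∩ B).Nonempty ∨ ∃ a ∈ A, ∃ b ∈ B, 0 < G.m a b

/-- A bramble: a collection of vertex sets, each inducing a connected subgraph,
any two of which touch. -/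
def IsBramble (B : Finset (Finset V)) : Prop :=
  (∀ A ∈ B, G.ConnectedSet A) ∧ ∀ A ∈ B, ∀ A' ∈ B, G.Touches A A'

/-- The treewidth of `G`: the maximum order (minimum size of a hitting set) of
a bramble on `G`, minus one. -/
noncomputable def treewidth : ℕ :=
  sSup {k : ℕ | ∃ B : Finset (Finset V), G.IsBramble B ∧ hittingNumber B = k} - 1

end Multigraph

namespace Multigraph

variable {V : Type} [Fintype V] [DecidableEq V] (G : Multigraph V)

/-- A scramble: a collection of vertex sets (eggs), each inducing a connected
subgraph. -/
def IsScramble (S : Finset (Finset V)) : Prop :=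
  ∀ A ∈ S, G.ConnectedSet A

/-- The number of edges of `G` with exactly one endpoint in `A`. -/
def cutSize (A : Finset V) : ℕ := ∑ u ∈ A, ∑ v ∈ Aᶜ, G.m u v

/-- The egg-cut number of a scramble: the minimum number of edges of `G` whose
removal separates `G` into two parts, each containing all vertices of some egg
(`⊤` if no such cut exists).  Such cuts are exactly the sets of edges joining
some `A` containing an egg to its complement, also containing an egg. -/
noncomputable def eggCutNumber (S : Finset (Finset V)) : ℕ∞ :=
  sInf {k : ℕ∞ | ∃ A : Finset V, (∃ e ∈ S, e ⊆ A) ∧ (∃ e ∈ S, e ⊆ Aᶜ) ∧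
    (G.cutSize A : ℕ∞) = k}

/-- The order of a scramble: the minimum of its hitting number and its egg-cut
number. -/
noncomputable def scrambleOrder (S : Finset (Finset V)) : ℕ∞ :=
  min (hittingNumber S : ℕ∞) (G.eggCutNumber S)

/-- The scramble number of `G`: the maximum order of a scramble on `G`. -/
noncomputable def scrambleNumber : ℕ∞ :=
  sSup {k : ℕ∞ | ∃ S : Finset (Finset V), G.IsScramble S ∧ G.scrambleOrder S = k}

end Multigraph

/-- Edge list of the icosahedron graph: apexes `0` and `11`, an upper pentagon
`1,…,5`, a lower pentagon `6,…,10`, with an antiprism between the pentagons. -/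
def icosahedronEdges : List (ℕ × ℕ) :=
  [(0,1),(0,2),(0,3),(0,4),(0,5),
   (1,2),(2,3),(3,4),(4,5),(5,1),
   (1,6),(1,7),(2,7),(2,8),(3,8),(3,9),(4,9),(4,10),(5,10),(5,6),
   (6,7),(7,8),(8,9),(9,10),(10,6),
   (11,6),(11,7),(11,8),(11,9),(11,10)]

/-- The icosahedron graph: the 1-skeleton of the regular icosahedron, the
5-regular simple graph on 12 vertices with 30 edges. -/
def icosahedronGraph : SimpleGraph (Fin 12) where
  Adj u v := u ≠ v ∧
    ((u.val, v.val) ∈ icosahedronEdges ∨ (v.val, u.val) ∈ icosahedronEdges)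
  symm := ⟨fun _ _ h => ⟨h.1.symm, h.2.symm⟩⟩
  loopless := ⟨fun _ h => h.1 rfl⟩

instance : DecidableRel icosahedronGraph.Adj :=
  fun _ _ => inferInstanceAs (Decidable (_ ∧ (_ ∨ _)))

/-- The 2-uniform scramble on the icosahedron graph: the eggs are exactly the
two-element vertex subsets `{u, v}` with `u` and `v` adjacent. -/
def icosahedronTwoUniform : Finset (Finset (Fin 12)) :=
  ((Finset.univ : Finset (Fin 12 × Fin 12)).filter fun p =>
    icosahedronGraph.Adj p.1 p.2).image fun p => {p.1, p.2}



namespace IcoAux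

abbrev G := Multigraph.ofSimpleGraph icosahedronGraph
abbrev S := icosahedronTwoUniform

set_option maxHeartbeats 1000000 in
theorem cutAux : ∀ b0 b1 b2 b3 b4 b5 b6 b7 b8 b9 b10 b11 : Bool,
    ((b0 && b1) || (b0 && b2) || (b0 && b3) || (b0 && b4) || (b0 && b5) || (b1 && b2) || (b2 && b3) || (b3 && b4) || (b4 && b5) || (b5 && b1) || (b1 && b6) || (b1 && b7) || (b2 && b7) || (b2 && b8) || (b3 && b8) || (b3 && b9) || (b4 && b9) || (b4 && b10) || (b5 && b10) || (b5 && b6) || (b6 && b7) || (b7 && b8) || (b8 && b9) || (b9 && b10) || (b10 && b6) || (b11 && b6) || (b11 && b7) || (b11 && b8) || (b11 && b9) || (b11 && b10)) = true →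
    (((!b0) && (!b1)) || ((!b0) && (!b2)) || ((!b0) && (!b3)) || ((!b0) && (!b4)) || ((!b0) && (!b5)) || ((!b1) && (!b2)) || ((!b2) && (!b3)) || ((!b3) && (!b4)) || ((!b4) && (!b5)) || ((!b5) && (!b1)) || ((!b1) && (!b6)) || ((!b1) && (!b7)) || ((!b2) && (!b7)) || ((!b2) && (!b8)) || ((!b3) && (!b8)) || ((!b3) && (!b9)) || ((!b4) && (!b9)) || ((!b4) && (!b10)) || ((!b5) && (!b10)) || ((!b5) && (!b6)) || ((!b6) && (!b7)) || ((!b7) && (!b8)) || ((!b8) && (!b9)) || ((!b9) && (!b10)) || ((!b10) && (!b6)) || ((!b11) && (!b6)) || ((!b11) && (!b7)) || ((!b11) && (!b8)) || ((!b11) && (!b9)) || ((!b11) && (!b10))) = true →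
    8 ≤ (cond (b0 && (!b1)) 1 0 + cond (b1 && (!b0)) 1 0) + (cond (b0 && (!b2)) 1 0 + cond (b2 && (!b0)) 1 0) + (cond (b0 && (!b3)) 1 0 + cond (b3 && (!b0)) 1 0) + (cond (b0 && (!b4)) 1 0 + cond (b4 && (!b0)) 1 0) + (cond (b0 && (!b5)) 1 0 + cond (b5 && (!b0)) 1 0) + (cond (b1 && (!b2)) 1 0 + cond (b2 && (!b1)) 1 0) + (cond (b2 && (!b3)) 1 0 + cond (b3 && (!b2)) 1 0) + (cond (b3 && (!b4)) 1 0 + cond (b4 && (!b3)) 1 0) + (cond (b4 && (!b5)) 1 0 + cond (b5 && (!b4)) 1 0) + (cond (b5 && (!b1)) 1 0 + cond (b1 && (!b5)) 1 0) + (cond (b1 && (!b6)) 1 0 + cond (b6 && (!b1)) 1 0) + (cond (b1 && (!b7)) 1 0 + cond (b7 && (!b1)) 1 0) + (cond (b2 && (!b7)) 1 0 + cond (b7 && (!b2)) 1 0) + (cond (b2 && (!b8)) 1 0 + cond (b8 && (!b2)) 1 0) + (cond (b3 && (!b8)) 1 0 + cond (b8 && (!b3)) 1 0) + (cond (b3 &&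 (!b9)) 1 0 + cond (b9 && (!b3)) 1 0) + (cond (b4 && (!b9)) 1 0 + cond (b9 && (!b4)) 1 0) + (cond (b4 && (!b10)) 1 0 + cond (b10 && (!b4)) 1 0) + (cond (b5 && (!b10)) 1 0 + cond (b10 && (!b5)) 1 0) + (cond (b5 && (!b6)) 1 0 + cond (b6 && (!b5)) 1 0) + (cond (b6 && (!b7)) 1 0 + cond (b7 && (!b6)) 1 0) + (cond (b7 && (!b8)) 1 0 + cond (b8 && (!b7)) 1 0) + (cond (b8 && (!b9)) 1 0 + cond (b9 && (!b8)) 1 0) + (cond (b9 && (!b10)) 1 0 + cond (b10 && (!b9)) 1 0) + (cond (b10 && (!b6)) 1 0 + cond (b6 && (!b10)) 1 0) + (cond (b11 && (!b6)) 1 0 + cond (b6 && (!b11)) 1 0) + (cond (b11 && (!b7)) 1 0 + cond (b7 && (!b11)) 1 0) + (cond (b11 && (!b8)) 1 0 + cond (b8 && (!b11)) 1 0) + (cond (b11 && (!b9)) 1 0 + cond (b9 && (!b11)) 1 0) + (cond (b11 && (!b10)) 1 0 + cond (b10 && (!b11)) 1 0) := by decide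

set_option maxHeartbeats 1000000 in
theorem hitAux : ∀ b0 b1 b2 b3 b4 b5 b6 b7 b8 b9 b10 b11 : Bool,
    ((b0 || b1) && ((b0 || b2) && ((b0 || b3) && ((b0 || b4) && ((b0 || b5) && ((b1 || b2) && ((b2 || b3) && ((b3 || b4) && ((b4 || b5) && ((b5 || b1) && ((b1 || b6) && ((b1 || b7) && ((b2 || b7) && ((b2 || b8) && ((b3 || b8) && ((b3 || b9) && ((b4 || b9) && ((b4 || b10) && ((b5 || b10) && ((b5 || b6) && ((b6 || b7) && ((b7 || b8) && ((b8 || b9) && ((b9 || b10) && ((b10 || b6) && ((b11 || b6) && ((b11 || b7) && ((b11 || b8) && ((b11 || b9) && (b11 || b10)))))))))))))))))))))))))))))) = true →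
    9 ≤ (cond b0 1 0) + (cond b1 1 0) + (cond b2 1 0) + (cond b3 1 0) + (cond b4 1 0) + (cond b5 1 0) + (cond b6 1 0) + (cond b7 1 0) + (cond b8 1 0) + (cond b9 1 0) + (cond b10 1 0) + (cond b11 1 0) := by decide

def EL : List (Fin 12 × Fin 12) := [(0,1),(0,2),(0,3),(0,4),(0,5),(1,2),(2,3),(3,4),(4,5),(5,1),(1,6),(1,7),(2,7),(2,8),(3,8),(3,9),(4,9),(4,10),(5,10),(5,6),(6,7),(7,8),(8,9),(9,10),(10,6),(11,6),(11,7),(11,8),(11,9),(11,10)]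

theorem edge_idx : ∀ u v : Fin 12, icosahedronGraph.Adj u v →
    (u, v) ∈ EL ∨ (v, u) ∈ EL := by decide

theorem adj_or (P : Fin 12 → Bool) (u v : Fin 12) (h : icosahedronGraph.Adj u v)
    (hu : P u = true) (hv : P v = true) :
    ((P 0 && P 1) || (P 0 && P 2) || (P 0 && P 3) || (P 0 && P 4) || (P 0 && P 5) || (P 1 && P 2) || (P 2 && P 3) || (P 3 && P 4) || (P 4 && P 5) || (P 5 && P 1) || (P 1 && P 6) || (P 1 && P 7) || (P 2 && P 7) || (P 2 && P 8) || (P 3 && P 8) || (P 3 && P 9) || (P 4 && P 9) || (P 4 && P 10) || (P 5 && P 10) || (P 5 && P 6) || (P 6 && P 7) || (P 7 && P 8) || (P 8 && P 9) || (P 9 && P 10) || (P 10 && P 6) || (P 11 && P 6) || (P 11 && P 7) || (P 11 && P 8) || (P 11 && P 9) || (P 11 && P 10)) = true := by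
  have h2 : (u, v) ∈ EL ∨ (v, u) ∈ EL := edge_idx u v h
  rcases h2 with h2 | h2 <;>
  · simp only [EL, List.mem_cons, List.not_mem_nil, or_false, Prod.mk.injEq] at h2
    rcases h2 with (⟨rfl,rfl⟩|⟨rfl,rfl⟩|⟨rfl,rfl⟩|⟨rfl,rfl⟩|⟨rfl,rfl⟩|⟨rfl,rfl⟩|⟨rfl,rfl⟩|⟨rfl,rfl⟩|⟨rfl,rfl⟩|⟨rfl,rfl⟩|⟨rfl,rfl⟩|⟨rfl,rfl⟩|⟨rfl,rfl⟩|⟨rfl,rfl⟩|⟨rfl,rfl⟩|⟨rfl,rfl⟩|⟨rfl,rfl⟩|⟨rfl,rfl⟩|⟨rfl,rfl⟩|⟨rfl,rfl⟩|⟨rfl,rfl⟩|⟨rfl,rfl⟩|⟨rfl,rfl⟩|⟨rfl,rfl⟩|⟨rfl,rfl⟩|⟨rfl,rfl⟩|⟨rfl,rfl⟩|⟨rfl,rfl⟩|⟨rfl,rfl⟩|⟨rfl,rfl⟩) <;> simp [hu, hv]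

theorem fs1 : Fin.succ ((0 : Fin 11)) = (1 : Fin 12) := rfl
theorem fs2 : Fin.succ (Fin.succ ((0 : Fin 10))) = (2 : Fin 12) := rfl
theorem fs3 : Fin.succ (Fin.succ (Fin.succ ((0 : Fin 9)))) = (3 : Fin 12) := rfl
theorem fs4 : Fin.succ (Fin.succ (Fin.succ (Fin.succ ((0 : Fin 8))))) = (4 : Fin 12) := rfl
theorem fs5 : Fin.succ (Fin.succ (Fin.succ (Fin.succ (Fin.succ ((0 : Fin 7)))))) = (5 : Fin 12) := rfl
theorem fs6 : Fin.succ (Fin.succ (Fin.succ (Fin.succ (Fin.succ (Fin.succ ((0 : Fin 6))))))) = (6 : Fin 12) := rfl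
theorem fs7 : Fin.succ (Fin.succ (Fin.succ (Fin.succ (Fin.succ (Fin.succ (Fin.succ ((0 : Fin 5)))))))) = (7 : Fin 12) := rfl
theorem fs8 : Fin.succ (Fin.succ (Fin.succ (Fin.succ (Fin.succ (Fin.succ (Fin.succ (Fin.succ ((0 : Fin 4))))))))) = (8 : Fin 12) := rfl
theorem fs9 : Fin.succ (Fin.succ (Fin.succ (Fin.succ (Fin.succ (Fin.succ (Fin.succ (Fin.succ (Fin.succ ((0 : Fin 3)))))))))) = (9 : Fin 12) := rfl
theorem fs10 : Fin.succ (Fin.succ (Fin.succ (Fin.succ (Fin.succ (Fin.succ (Fin.succ (Fin.succ (Fin.succ (Fin.succ ((0 : Fin 2))))))))))) = (10 : Fin 12) := rfl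
theorem fs11 : Fin.succ (Fin.succ (Fin.succ (Fin.succ (Fin.succ (Fin.succ (Fin.succ (Fin.succ (Fin.succ (Fin.succ (Fin.succ ((0 : Fin 1)))))))))))) = (11 : Fin 12) := rfl

theorem pairhit (W : Finset (Fin 12)) (hW : IsHittingSet S W) (u v : Fin 12)
    (h : ({u, v} : Finset (Fin 12)) ∈ S) : u ∈ W ∨ v ∈ W := by
  obtain ⟨x, hx⟩ := hW _ h
  rw [Finset.mem_inter] at hx
  rcases Finset.mem_insert.1 hx.1 with h' | h'
  · exact Or.inl (h' ▸ hx.2)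
  · exact Or.inr ((Finset.mem_singleton.1 h') ▸ hx.2)

theorem hit_lower (W : Finset (Fin 12)) (hW : IsHittingSet S W) : 9 ≤ W.card := by
  have e0 : ((decide (((0:Fin 12)) ∈ W)) || (decide (((1:Fin 12)) ∈ W))) = true := by simpa using pairhit W hW 0 1 (by decide)
  have e1 : ((decide (((0:Fin 12)) ∈ W)) || (decide (((2:Fin 12)) ∈ W))) = true := by simpa using pairhit W hW 0 2 (by decide)
  have e2 : ((decide (((0:Fin 12)) ∈ W)) || (decide (((3:Fin 12)) ∈ W))) = true := by simpa using pairhit W hW 0 3 (by decide)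
  have e3 : ((decide (((0:Fin 12)) ∈ W)) || (decide (((4:Fin 12)) ∈ W))) = true := by simpa using pairhit W hW 0 4 (by decide)
  have e4 : ((decide (((0:Fin 12)) ∈ W)) || (decide (((5:Fin 12)) ∈ W))) = true := by simpa using pairhit W hW 0 5 (by decide)
  have e5 : ((decide (((1:Fin 12)) ∈ W)) || (decide (((2:Fin 12)) ∈ W))) = true := by simpa using pairhit W hW 1 2 (by decide)
  have e6 : ((decide (((2:Fin 12)) ∈ W)) || (decide (((3:Fin 12)) ∈ W))) = true := by simpa using pairhit W hW 2 3 (by decide)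
  have e7 : ((decide (((3:Fin 12)) ∈ W)) || (decide (((4:Fin 12)) ∈ W))) = true := by simpa using pairhit W hW 3 4 (by decide)
  have e8 : ((decide (((4:Fin 12)) ∈ W)) || (decide (((5:Fin 12)) ∈ W))) = true := by simpa using pairhit W hW 4 5 (by decide)
  have e9 : ((decide (((5:Fin 12)) ∈ W)) || (decide (((1:Fin 12)) ∈ W))) = true := by simpa using pairhit W hW 5 1 (by decide)
  have e10 : ((decide (((1:Fin 12)) ∈ W)) || (decide (((6:Fin 12)) ∈ W))) = true := by simpa using pairhit W hW 1 6 (by decide)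
  have e11 : ((decide (((1:Fin 12)) ∈ W)) || (decide (((7:Fin 12)) ∈ W))) = true := by simpa using pairhit W hW 1 7 (by decide)
  have e12 : ((decide (((2:Fin 12)) ∈ W)) || (decide (((7:Fin 12)) ∈ W))) = true := by simpa using pairhit W hW 2 7 (by decide)
  have e13 : ((decide (((2:Fin 12)) ∈ W)) || (decide (((8:Fin 12)) ∈ W))) = true := by simpa using pairhit W hW 2 8 (by decide)
  have e14 : ((decide (((3:Fin 12)) ∈ W)) || (decide (((8:Fin 12)) ∈ W))) = true := by simpa using pairhit W hW 3 8 (by decide)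
  have e15 : ((decide (((3:Fin 12)) ∈ W)) || (decide (((9:Fin 12)) ∈ W))) = true := by simpa using pairhit W hW 3 9 (by decide)
  have e16 : ((decide (((4:Fin 12)) ∈ W)) || (decide (((9:Fin 12)) ∈ W))) = true := by simpa using pairhit W hW 4 9 (by decide)
  have e17 : ((decide (((4:Fin 12)) ∈ W)) || (decide (((10:Fin 12)) ∈ W))) = true := by simpa using pairhit W hW 4 10 (by decide)
  have e18 : ((decide (((5:Fin 12)) ∈ W)) || (decide (((10:Fin 12)) ∈ W))) = true := by simpa using pairhit W hW 5 10 (by decide)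
  have e19 : ((decide (((5:Fin 12)) ∈ W)) || (decide (((6:Fin 12)) ∈ W))) = true := by simpa using pairhit W hW 5 6 (by decide)
  have e20 : ((decide (((6:Fin 12)) ∈ W)) || (decide (((7:Fin 12)) ∈ W))) = true := by simpa using pairhit W hW 6 7 (by decide)
  have e21 : ((decide (((7:Fin 12)) ∈ W)) || (decide (((8:Fin 12)) ∈ W))) = true := by simpa using pairhit W hW 7 8 (by decide)
  have e22 : ((decide (((8:Fin 12)) ∈ W)) || (decide (((9:Fin 12)) ∈ W))) = true := by simpa using pairhit W hW 8 9 (by decide)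
  have e23 : ((decide (((9:Fin 12)) ∈ W)) || (decide (((10:Fin 12)) ∈ W))) = true := by simpa using pairhit W hW 9 10 (by decide)
  have e24 : ((decide (((10:Fin 12)) ∈ W)) || (decide (((6:Fin 12)) ∈ W))) = true := by simpa using pairhit W hW 10 6 (by decide)
  have e25 : ((decide (((11:Fin 12)) ∈ W)) || (decide (((6:Fin 12)) ∈ W))) = true := by simpa using pairhit W hW 11 6 (by decide)
  have e26 : ((decide (((11:Fin 12)) ∈ W)) || (decide (((7:Fin 12)) ∈ W))) = true := by simpa using pairhit W hW 11 7 (by decide)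
  have e27 : ((decide (((11:Fin 12)) ∈ W)) || (decide (((8:Fin 12)) ∈ W))) = true := by simpa using pairhit W hW 11 8 (by decide)
  have e28 : ((decide (((11:Fin 12)) ∈ W)) || (decide (((9:Fin 12)) ∈ W))) = true := by simpa using pairhit W hW 11 9 (by decide)
  have e29 : ((decide (((11:Fin 12)) ∈ W)) || (decide (((10:Fin 12)) ∈ W))) = true := by simpa using pairhit W hW 11 10 (by decide)
  have key := hitAux (decide (((0:Fin 12)) ∈ W)) (decide (((1:Fin 12)) ∈ W)) (decide (((2:Fin 12)) ∈ W)) (decide (((3:Fin 12)) ∈ W)) (decide (((4:Fin 12)) ∈ W)) (decide (((5:Fin 12)) ∈ W)) (decide (((6:Fin 12)) ∈ W)) (decide (((7:Fin 12)) ∈ W)) (decide (((8:Fin 12)) ∈ W)) (decide (((9:Fin 12)) ∈ W)) (decide (((10:Fin 12)) ∈ W)) (decide (((11:Fin 12)) ∈ W)) (by simp only [Bool.and_eq_true]; exact ⟨e0, e1, e2, e3, e4, e5, e6, e7, e8, e9, e10, e11, e12, e13, e14, e15, e16, e17, e18, e19, e20, e21, e22, e23, e24, e25, e26, e27, e28,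 e29⟩)
  simp only [Bool.cond_decide] at key
  have hcard : W.card = ∑ i : Fin 12, if i ∈ W then 1 else 0 := by
    rw [Finset.sum_ite_mem, Finset.univ_inter, Finset.card_eq_sum_ones]
  rw [hcard]
  simp only [Fin.sum_univ_succ, Fin.sum_univ_zero, fs1, fs2, fs3, fs4, fs5, fs6, fs7, fs8, fs9, fs10, fs11, add_zero]
  omega

theorem cutSize_double (A : Finset (Fin 12)) :
    G.cutSize A
      = ∑ u : Fin 12, ∑ v : Fin 12, if u ∈ A ∧ ¬ v ∈ A then G.m u v else 0 := by
  have h2 : ∀ f : Fin 12 → ℕ, ∑ v ∈ Aᶜ, f v = ∑ v : Fin 12, if ¬ v ∈ A then f v else 0 := by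
    intro f
    rw [Finset.sum_ite, Finset.sum_const_zero, add_zero]
    apply Finset.sum_congr _ (fun x _ => rfl)
    ext x; simp
  unfold Multigraph.cutSize
  rw [show ∑ u ∈ A, ∑ v ∈ Aᶜ, G.m u v = ∑ u : Fin 12, if u ∈ A then (∑ v ∈ Aᶜ, G.m u v) else 0
    from by rw [Finset.sum_ite_mem, Finset.univ_inter]]
  apply Finset.sum_congr rfl
  intro u _
  by_cases hu : u ∈ A
  · simp only [hu, if_true, true_and]; exact h2 _
  · simp [hu]

theorem cut_lower (A : Finset (Fin 12)) (h1 : ∃ e ∈ S, e ⊆ A) (h2 : ∃ e ∈ S, e ⊆ Aᶜ) :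
    8 ≤ G.cutSize A := by
  obtain ⟨e, heS, heA⟩ := h1
  obtain ⟨e', heS', heC⟩ := h2
  simp only [icosahedronTwoUniform, Finset.mem_image, Finset.mem_filter, Finset.mem_univ, true_and] at heS heS'
  obtain ⟨⟨u, v⟩, hadj, rfl⟩ := heS
  obtain ⟨⟨u', v'⟩, hadj', rfl⟩ := heS'
  have hu : u ∈ A := heA (by simp)
  have hv : v ∈ A := heA (by simp)
  have hu' : ¬ u' ∈ A := by have := heC (show u' ∈ {u', v'} by simp); simpa using this
  have hv' : ¬ v' ∈ A := by have := heC (show v' ∈ {u', v'} by simp); simpa using this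
  have H1 := adj_or (fun i => decide (i ∈ A)) u v hadj (by simpa using hu) (by simpa using hv)
  have H2 := adj_or (fun i => !decide (i ∈ A)) u' v' hadj' (by simpa using hu') (by simpa using hv')
  have key := cutAux _ _ _ _ _ _ _ _ _ _ _ _ H1 H2
  simp only [← decide_not, ← Bool.decide_and, Bool.cond_decide] at key
  rw [cutSize_double]
  simp (config := { decide := true }) only [Fin.sum_univ_succ, Fin.sum_univ_zero, fs1, fs2, fs3, fs4, fs5, fs6, fs7, fs8, fs9, fs10, fs11,
    add_zero, Multigraph.ofSimpleGraph, if_true, if_false, ite_self]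
  linarith

end IcoAux

theorem memS_of_adj (u v : Fin 12) (h : icosahedronGraph.Adj u v) :
    ({u, v} : Finset (Fin 12)) ∈ icosahedronTwoUniform :=
  Finset.mem_image.2 ⟨(u, v), Finset.mem_filter.2 ⟨Finset.mem_univ _, h⟩, rfl⟩

set_option maxRecDepth 4000 in
theorem W9_hits : IsHittingSet icosahedronTwoUniform ({0,2,3,4,5,6,7,9,11} : Finset (Fin 12)) := by
  intro A hA
  obtain ⟨⟨u, v⟩, hp, rfl⟩ := Finset.mem_image.1 hA
  have hadj : icosahedronGraph.Adj u v := (Finset.mem_filter.1 hp).2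
  revert hadj
  revert u v
  decide

set_option maxRecDepth 4000 in
set_option maxHeartbeats 1000000 in
/-- The 2-uniform scramble on the icosahedron graph has hitting number `9`,
egg-cut number `8`, and hence order `8`. -/
theorem icosahedron_twoUniform_order :
    hittingNumber icosahedronTwoUniform = 9 ∧
    (Multigraph.ofSimpleGraph icosahedronGraph).eggCutNumber icosahedronTwoUniform
      = (8 : ℕ∞) ∧
    (Multigraph.ofSimpleGraph icosahedronGraph).scrambleOrder icosahedronTwoUniform
      = (8 : ℕ∞) := by
  have Hhit : hittingNumber icosahedronTwoUniform = 9 := by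
    apply le_antisymm
    · exact Nat.sInf_le ⟨({0,2,3,4,5,6,7,9,11} : Finset (Fin 12)), W9_hits, by decide⟩
    · apply le_csInf
      · exact ⟨9, ({0,2,3,4,5,6,7,9,11} : Finset (Fin 12)), W9_hits, by decide⟩
      · rintro k ⟨W, hW, rfl⟩
        exact IcoAux.hit_lower W hW
  have Hcut : (Multigraph.ofSimpleGraph icosahedronGraph).eggCutNumber icosahedronTwoUniform
      = (8 : ℕ∞) := by
    apply le_antisymm
    · apply sInf_le
      refine ⟨({0,1} : Finset (Fin 12)),
        ⟨{0,1}, memS_of_adj 0 1 (by decide), Finset.Subset.refl _⟩,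
        ⟨({8,9} : Finset (Fin 12)), memS_of_adj 8 9 (by decide), by decide⟩, ?_⟩
      rw [show (Multigraph.ofSimpleGraph icosahedronGraph).cutSize {0,1} = 8 from by decide]
      rfl
    · apply le_sInf
      rintro k ⟨A, h1, h2, rfl⟩
      exact_mod_cast IcoAux.cut_lower A h1 h2
  refine ⟨Hhit, Hcut, ?_⟩
  unfold Multigraph.scrambleOrder
  rw [Hhit, Hcut]
  rfl
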